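/- Let A, B, C be positive integers, let x₁ < x₂ < ⋯ < x_A and y₁ < y₂ < ⋯ < y_B be strictly increasing sequences of integers, and let Δ be a set of C integers. Then the number of pairs (i, j) with 1 ≤ i ≤ A, 1 ≤ j ≤ B, and x_i + y_j ∈ Δ is at most Σ_{ℓ=1}^{min(A,B)} min(C, A + B + 1 − 2ℓ). -/

import Mathlib

/-- Given strictly increasing integer sequences x₁ < ⋯ < x_A and
y₁ < ⋯ < y_B and a set Δ of C integers, the number of pairs (i,j) with
x_i + y_j ∈ Δ is at most Σ_{ℓ=1}^{min(A,B)} min(C, A + B + 1 − 2ℓ). -/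
theorem grid_diagonal_intersections_bound (A B C : ℕ) (hA : 0 < A) (hB : 0 < B)
    (hC : 0 < C) (x : Fin A → ℤ) (y : Fin B → ℤ)
    (hx : StrictMono x) (hy : StrictMono y)
    (Δ : Finset ℤ) (hΔ : Δ.card = C) :
    ((Finset.univ : Finset (Fin A × Fin B)).filter
        (fun ij => x ij.1 + y ij.2 ∈ Δ)).card ≤
      ∑ ℓ ∈ Finset.Icc 1 (min A B), min C (A + B + 1 - 2 * ℓ) := by
  classical
  set U := (Finset.univ : Finset (Fin A × Fin B)).filter
      (fun ij => x ij.1 + y ij.2 ∈ Δ) with hU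
  have hmem : ∀ p ∈ U, min (p.1.1 + 1) (B - p.2.1) ∈ Finset.Icc 1 (min A B) := by
    intro p _
    have h1 : p.1.1 < A := p.1.isLt
    have h2 : p.2.1 < B := p.2.isLt
    simp only [Finset.mem_Icc]
    omega
  rw [Finset.card_eq_sum_card_fiberwise hmem]
  apply Finset.sum_le_sum
  intro ℓ hℓ
  simp only [Finset.mem_Icc] at hℓ
  have hcomp : ∀ p q : Fin A × Fin B,
      min (p.1.1 + 1) (B - p.2.1) = ℓ → min (q.1.1 + 1) (B - q.2.1) = ℓ →
      (p.1.1 ≤ q.1.1 ∧ p.2.1 ≤ q.2.1) ∨ (q.1.1 ≤ p.1.1 ∧ q.2.1 ≤ p.2.1) := by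
    intro p q hp hq
    have h1 : p.2.1 < B := p.2.isLt
    have h2 : q.2.1 < B := q.2.isLt
    omega
  apply le_min
  · -- each chain meets at most C good pairs, since sums are strictly
    -- increasing along a chain and lie in Δ
    rw [← hΔ]
    apply Finset.card_le_card_of_injOn (fun p => x p.1 + y p.2)
    · intro p hp
      simp only [Finset.mem_coe, hU, Finset.mem_filter, Finset.mem_univ, true_and] at hp
      exact hp.1
    · intro p hp q hq heq
      simp only [Finset.coe_filter, hU, Finset.mem_filter, Finset.mem_univ,
        true_and, Set.mem_setOf_eq] at hp hq
      have heq' : x p.1 + y p.2 = x q.1 + y q.2 := heq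
      rcases hcomp p q hp.2 hq.2 with ⟨h1, h2⟩ | ⟨h1, h2⟩
      · have hx1 : x p.1 ≤ x q.1 := hx.monotone h1
        have hy1 : y p.2 ≤ y q.2 := hy.monotone h2
        have e1 : x p.1 = x q.1 := by linarith
        have e2 : y p.2 = y q.2 := by linarith
        exact Prod.ext (hx.injective e1) (hy.injective e2)
      · have hx1 : x q.1 ≤ x p.1 := hx.monotone h1
        have hy1 : y q.2 ≤ y p.2 := hy.monotone h2
        have e1 : x p.1 = x q.1 := by linarith
        have e2 : y p.2 = y q.2 := by linarith
        exact Prod.ext (hx.injective e1) (hy.injective e2)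
  · -- each chain has length A+B+1-2ℓ
    calc (U.filter (fun p => min (p.1.1 + 1) (B - p.2.1) = ℓ)).card
        ≤ (Finset.Icc (ℓ - 1) (A + B - 1 - ℓ)).card := by
          apply Finset.card_le_card_of_injOn (fun p => p.1.1 + p.2.1)
          · intro p hp
            simp only [Finset.mem_coe, Finset.mem_filter] at hp
            have h1 : p.1.1 < A := p.1.isLt
            have h2 : p.2.1 < B := p.2.isLt
            have h3 := hp.2
            simp only [Finset.mem_coe, Finset.mem_Icc]
            omega
          · intro p hp q hq heq
            simp only [Finset.coe_filter, Set.mem_setOf_eq] at hp hq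
            have heq' : p.1.1 + p.2.1 = q.1.1 + q.2.1 := heq
            rcases hcomp p q hp.2 hq.2 with ⟨h1, h2⟩ | ⟨h1, h2⟩ <;>
            · have e1 : p.1.1 = q.1.1 := by omega
              have e2 : p.2.1 = q.2.1 := by omega
              exact Prod.ext (Fin.ext e1) (Fin.ext e2)
      _ = A + B + 1 - 2 * ℓ := by
          rw [Nat.card_Icc]
          omega
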